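/- Let ξ be a D-doubling gauge function on balls of a metric space X, let E ⊆ B(p,R) and L ≥ 1. Then min( H^ξ_{R/L}(E), D^{-⌊log₂ L⌋ - 8}·ξ(B(p,R)) ) ≤ H^ξ_R(E), where H^ξ_r denotes the spherical Hausdorff ξ-content at scale r. -/
import Mathlib


open Metric Set MeasureTheory Filter ENNReal Topology

noncomputable section

variable {X : Type*} [MetricSpace X]

/-- A gauge function assigns a positive real to each ball (center, radius). -/
def IsGauge (ξ : X → ℝ → ℝ) : Prop := ∀ x r, 0 < r → 0 < ξ x r

/-- `ξ` is `D`-doubling: for balls `B(x,r) ⊆ B(y,r')` with `r ≤ r' ≤ 2r`,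
`D⁻¹ ξ(B) ≤ ξ(B') ≤ D ξ(B)`. -/
def IsDoublingGauge (D : ℝ) (ξ : X → ℝ → ℝ) : Prop :=
  ∀ x r y r', 0 < r → ball x r ⊆ ball y r' → r ≤ r' → r' ≤ 2 * r →
    D⁻¹ * ξ x r ≤ ξ y r' ∧ ξ y r' ≤ D * ξ x r

/-- `ν ≪ ξ` : for balls `B ⊆ B'` with `rad B ≤ rad B'`, `ξ(B')/ν(B') ≤ ξ(B)/ν(B)`. -/
def Dominates (ν ξ : X → ℝ → ℝ) : Prop :=
  ∀ x r y r', 0 < r → ball x r ⊆ ball y r' → r ≤ r' →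
    ξ y r' / ν y r' ≤ ξ x r / ν x r

open scoped Classical in
/-- Spherical Hausdorff `ξ`-content at scale `s`. -/
noncomputable def content (ξ : X → ℝ → ℝ) (s : ℝ) (A : Set X) : ℝ≥0∞ :=
  ⨅ (c : ℕ → X) (ρ : ℕ → ℝ) (_ : ∀ n, ρ n ≤ s) (_ : A ⊆ ⋃ n, ball (c n) (ρ n)),
    ∑' n, if 0 < ρ n then ENNReal.ofReal (ξ (c n) (ρ n)) else 0

open scoped Classical in
/-- Spherical Hausdorff `ξ`-content with no scale restriction. -/
noncomputable def contentInf (ξ : X → ℝ → ℝ) (A : Set X) : ℝ≥0∞ :=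
  ⨅ (c : ℕ → X) (ρ : ℕ → ℝ) (_ : A ⊆ ⋃ n, ball (c n) (ρ n)),
    ∑' n, if 0 < ρ n then ENNReal.ofReal (ξ (c n) (ρ n)) else 0

/-- The limsup set of a collection of closed balls: points lying in balls of the
collection of arbitrarily small positive radius. -/
def limsupSet (B : Set (X × ℝ)) : Set X :=
  {x | ∀ ε > 0, ∃ p ∈ B, 0 < p.2 ∧ p.2 < ε ∧ x ∈ closedBall p.1 p.2}

/-- Inflation of a collection of balls by a factor `t`. -/
def inflate (t : ℝ) (B : Set (X × ℝ)) : Set (X × ℝ) := (fun p => (p.1, t * p.2)) '' B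

/-- The closed balls of the collection are pairwise disjoint. -/
def PairwiseDisjointCB (B : Set (X × ℝ)) : Prop :=
  ∀ p ∈ B, ∀ q ∈ B, p ≠ q → Disjoint (closedBall p.1 p.2) (closedBall q.1 q.2)

/-- Scale change lemma for Hausdorff contents. -/
theorem stmt1 (D : ℝ) (hD : 1 ≤ D) (ξ : X → ℝ → ℝ) (hg : IsGauge ξ)
    (hdb : IsDoublingGauge D ξ) (p : X) (R L : ℝ) (hR : 0 < R) (hL : 1 ≤ L)
    (E : Set X) (hE : E ⊆ ball p R) :
    min (content ξ (R / L) E) (ENNReal.ofReal (D ^ (-⌊Real.logb 2 L⌋ - 8) * ξ p R)) ≤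
      content ξ R E := by
  classical
  have hD0 : (0:ℝ) < D := lt_of_lt_of_le one_pos hD
  have hL0 : (0:ℝ) < L := lt_of_lt_of_le one_pos hL
  have hRL : 0 < R / L := div_pos hR hL0
  set M : ℕ := (⌊Real.logb 2 L⌋).toNat with hM
  have hm0 : (0:ℤ) ≤ ⌊Real.logb 2 L⌋ :=
    Int.floor_nonneg.2 (Real.logb_nonneg one_lt_two hL)
  have hmM : ⌊Real.logb 2 L⌋ = (M : ℤ) := (Int.toNat_of_nonneg hm0).symm
  conv_rhs => rw [content]
  refine le_iInf fun c => le_iInf fun ρ => le_iInf fun hρ => le_iInf fun hcov => ?_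
  by_cases h : ∃ n, R / L < ρ n ∧ (E ∩ ball (c n) (ρ n)).Nonempty
  · obtain ⟨n₀, hn₀, x, hxE, hxb⟩ := h
    set c₀ := c n₀ with hc₀
    set ρ₀ := ρ n₀ with hρ₀
    have hρ0 : 0 < ρ₀ := lt_trans hRL hn₀
    have hρR : ρ₀ ≤ R := hρ n₀
    have hxc : dist x c₀ < ρ₀ := mem_ball.1 hxb
    have hxp : dist x p < R := mem_ball.1 (hE hxE)
    have hd : dist c₀ p < ρ₀ + R := by
      have := dist_triangle c₀ x p
      rw [dist_comm c₀ x] at this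
      linarith
    have flip : ∀ a b : ℝ, D⁻¹ * a ≤ b → a ≤ D * b := by
      intro a b hab
      have h2 := mul_le_mul_of_nonneg_left hab hD0.le
      rwa [← mul_assoc, mul_inv_cancel₀ hD0.ne', one_mul] at h2
    -- growing lemma
    have grow : ∀ k : ℕ, ξ c₀ (2 ^ k * ρ₀) ≤ D ^ k * ξ c₀ ρ₀ := by
      intro k
      induction k with
      | zero => simp
      | succ k ih =>
        have hpos : 0 < 2 ^ k * ρ₀ := by positivity
        have hle : (2:ℝ) ^ k * ρ₀ ≤ 2 ^ (k+1) * ρ₀ := by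
          have : (2:ℝ) ^ k ≤ 2 ^ (k+1) := by
            exact pow_le_pow_right₀ one_le_two (Nat.le_succ k)
          exact mul_le_mul_of_nonneg_right this hρ0.le
        have h1 := (hdb c₀ (2 ^ k * ρ₀) c₀ (2 ^ (k+1) * ρ₀) hpos
          (ball_subset_ball hle) hle (le_of_eq (by ring))).2
        calc ξ c₀ (2 ^ (k+1) * ρ₀) ≤ D * ξ c₀ (2 ^ k * ρ₀) := h1
          _ ≤ D * (D ^ k * ξ c₀ ρ₀) := mul_le_mul_of_nonneg_left ih hD0.le
          _ = D ^ (k+1) * ξ c₀ ρ₀ := by ring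
    -- find j
    have hex : ∃ n : ℕ, 2 * R ≤ 2 ^ n * ρ₀ := by
      obtain ⟨n, hn⟩ := pow_unbounded_of_one_lt (2 * R / ρ₀) (one_lt_two (α := ℝ))
      refine ⟨n, ?_⟩
      rw [div_lt_iff₀ hρ0] at hn
      linarith
    set j := Nat.find hex with hj_def
    have hj : 2 * R ≤ 2 ^ j * ρ₀ := Nat.find_spec hex
    have hj1 : 1 ≤ j := by
      rcases Nat.eq_zero_or_pos j with h0 | h0
      · exfalso
        rw [h0] at hj
        simp at hj
        linarith
      · exact h0
    have hjlt : 2 ^ (j - 1) * ρ₀ < 2 * R :=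
      lt_of_not_ge (Nat.find_min hex (Nat.sub_lt hj1 one_pos))
    have h2j : (2:ℝ) ^ j = 2 ^ (j - 1) * 2 := by
      rw [← pow_succ, Nat.sub_add_cancel hj1]
    have hj4R : 2 ^ j * ρ₀ ≤ 2 * (2 * R) := by
      rw [h2j]; nlinarith
    -- chain
    have hsub : ball c₀ (2 * R) ⊆ ball p (4 * R) := by
      intro z hz
      rw [mem_ball] at hz ⊢
      have := dist_triangle z c₀ p
      linarith
    have step1 : ξ p R ≤ D * ξ p (2 * R) :=
      flip _ _ (hdb p R p (2 * R) hR (ball_subset_ball (by linarith))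
        (by linarith) le_rfl).1
    have step2 : ξ p (2 * R) ≤ D * ξ p (4 * R) :=
      flip _ _ (hdb p (2 * R) p (4 * R) (by linarith)
        (ball_subset_ball (by linarith)) (by linarith) (by linarith)).1
    have step3 : ξ p (4 * R) ≤ D * ξ c₀ (2 * R) :=
      (hdb c₀ (2 * R) p (4 * R) (by linarith) hsub (by linarith) (by linarith)).2
    have step4 : ξ c₀ (2 * R) ≤ D * ξ c₀ (2 ^ j * ρ₀) :=
      flip _ _ (hdb c₀ (2 * R) c₀ (2 ^ j * ρ₀) (by linarith)
        (ball_subset_ball hj) hj hj4R).1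
    have chain : ξ p R ≤ D ^ (j + 4) * ξ c₀ ρ₀ := by
      calc ξ p R ≤ D * ξ p (2 * R) := step1
        _ ≤ D * (D * ξ p (4 * R)) := mul_le_mul_of_nonneg_left step2 hD0.le
        _ ≤ D * (D * (D * ξ c₀ (2 * R))) :=
            mul_le_mul_of_nonneg_left
              (mul_le_mul_of_nonneg_left step3 hD0.le) hD0.le
        _ ≤ D * (D * (D * (D * ξ c₀ (2 ^ j * ρ₀)))) :=
            mul_le_mul_of_nonneg_left (mul_le_mul_of_nonneg_left
              (mul_le_mul_of_nonneg_left step4 hD0.le) hD0.le) hD0.le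
        _ ≤ D * (D * (D * (D * (D ^ j * ξ c₀ ρ₀)))) :=
            mul_le_mul_of_nonneg_left (mul_le_mul_of_nonneg_left
              (mul_le_mul_of_nonneg_left
                (mul_le_mul_of_nonneg_left (grow j) hD0.le) hD0.le) hD0.le) hD0.le
        _ = D ^ (j + 4) * ξ c₀ ρ₀ := by ring
    -- bound j
    have hpow : (2:ℝ) ^ (j - 1) < 2 * L := by
      have h1 : (2:ℝ) ^ (j - 1) * (R / L) < 2 * R :=
        (mul_lt_mul_of_pos_left hn₀ (pow_pos two_pos (j - 1))).trans hjlt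
      have h2 : (2:ℝ) ^ (j - 1) * R < 2 * R * L := by
        rw [← mul_div_assoc] at h1
        exact (div_lt_iff₀ hL0).1 h1
      nlinarith
    have hlogj : ((j - 1 : ℕ) : ℝ) < 1 + Real.logb 2 L := by
      have h1 : Real.logb 2 ((2:ℝ) ^ (j - 1)) < Real.logb 2 (2 * L) :=
        Real.logb_lt_logb one_lt_two (pow_pos two_pos _) hpow
      rw [Real.logb_pow, Real.logb_self_eq_one one_lt_two,
        Real.logb_mul two_ne_zero hL0.ne',
        Real.logb_self_eq_one one_lt_two, mul_one] at h1
      linarith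
    have hfloor : Real.logb 2 L < (M : ℝ) + 1 := by
      have h1 := Int.lt_floor_add_one (Real.logb 2 L)
      rw [hmM] at h1
      exact_mod_cast h1
    have hjM : j + 4 ≤ M + 8 := by
      have h1 : ((j - 1 : ℕ) : ℝ) < (M : ℝ) + 2 := by linarith
      have h2 : (j - 1 : ℕ) < M + 2 := by exact_mod_cast h1
      omega
    have hfin : ξ p R ≤ D ^ (M + 8) * ξ c₀ ρ₀ :=
      chain.trans (mul_le_mul_of_nonneg_right
        (pow_le_pow_right₀ hD hjM) (hg c₀ ρ₀ hρ0).le)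
    have key : D ^ (-⌊Real.logb 2 L⌋ - 8) * ξ p R ≤ ξ c₀ ρ₀ := by
      have hz : D ^ (-⌊Real.logb 2 L⌋ - 8) = (D ^ (M + 8 : ℕ))⁻¹ := by
        rw [hmM, show (-(M:ℤ) - 8) = -((M + 8 : ℕ) : ℤ) by push_cast; ring,
          zpow_neg, zpow_natCast]
      have hdpos : (0:ℝ) < D ^ (M + 8) := pow_pos hD0 _
      rw [hz]
      calc (D ^ (M + 8))⁻¹ * ξ p R
          ≤ (D ^ (M + 8))⁻¹ * (D ^ (M + 8) * ξ c₀ ρ₀) :=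
            mul_le_mul_of_nonneg_left hfin (inv_nonneg.2 hdpos.le)
        _ = ξ c₀ ρ₀ := by field_simp
    refine le_trans (min_le_right _ _) ?_
    refine le_trans (ENNReal.ofReal_le_ofReal key) ?_
    have := ENNReal.le_tsum (f := fun n =>
      if 0 < ρ n then ENNReal.ofReal (ξ (c n) (ρ n)) else 0) n₀
    rwa [if_pos hρ0] at this
  · push_neg at h
    set ρ' : ℕ → ℝ := fun n =>
      if (E ∩ ball (c n) (ρ n)).Nonempty then ρ n else 0 with hρ'
    refine le_trans (min_le_left _ _) ?_
    calc content ξ (R / L) E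
        ≤ ∑' n, if 0 < ρ' n then ENNReal.ofReal (ξ (c n) (ρ' n)) else 0 := by
          rw [content]
          refine iInf_le_of_le c <| iInf_le_of_le ρ' <|
            iInf_le_of_le ?_ <| iInf_le_of_le ?_ le_rfl
          · intro n
            by_cases hn : (E ∩ ball (c n) (ρ n)).Nonempty
            · simp only [hρ', if_pos hn]
              exact le_of_not_gt fun hlt => hn.ne_empty (h n hlt)
            · simp only [hρ', if_neg hn]
              exact hRL.le
          · intro y hy
            obtain ⟨n, hn⟩ := mem_iUnion.1 (hcov hy)
            refine mem_iUnion.2 ⟨n, ?_⟩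
            have he : ρ' n = ρ n := if_pos ⟨y, hy, hn⟩
            rw [he]
            exact hn
      _ ≤ ∑' n, if 0 < ρ n then ENNReal.ofReal (ξ (c n) (ρ n)) else 0 := by
          refine ENNReal.tsum_le_tsum fun n => ?_
          by_cases hn : (E ∩ ball (c n) (ρ n)).Nonempty
          · simp [hρ', hn]
          · simp [hρ', hn]
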